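/- Let Ω ⊆ ℂ be a domain whose complement contains at least two points and with nonempty boundary. Suppose there exist constants M > 0 and δ₀ ∈ (0, 1/e) such that for every z ∈ Ω with δ_Ω(z) < δ₀ one has ρ_Ω(z) ≥ M / (δ_Ω(z)·log log(1/δ_Ω(z))), i.e. every holomorphic f : 𝔻 → Ω with f(0) = z satisfies 2/|f′(0)| ≥ M/(δ_Ω(z)·log log(1/δ_Ω(z))). Then there exists β > 0 such that ∂Ω satisfies condition (U)_{2,β}. -/

import Mathlib

open Metric Set

lemma U2aux_ne {w : ℂ} (hw : ‖w‖ < 1) : (1:ℂ) - w ≠ 0 := by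
  intro h
  rw [sub_eq_zero] at h
  rw [← h] at hw
  simp at hw

lemma U2aux_re_pos {w : ℂ} (hw : ‖w‖ < 1) : 0 < ((1 + w)/(1 - w)).re := by
  have hne := U2aux_ne hw
  have hsq : w.re ^ 2 + w.im ^ 2 < 1 := by
    have := Complex.sq_norm w
    rw [Complex.normSq_apply] at this
    nlinarith [norm_nonneg w]
  have hns : 0 < Complex.normSq (1 - w) := Complex.normSq_pos.mpr hne
  rw [Complex.div_re, ← add_div]
  apply div_pos _ hns
  simp only [Complex.add_re, Complex.one_re, Complex.sub_re, Complex.add_im,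
    Complex.one_im, Complex.sub_im]
  nlinarith

lemma U2aux_slit {w : ℂ} (hw : ‖w‖ < 1) : (1 + w)/(1 - w) ∈ Complex.slitPlane :=
  Or.inl (U2aux_re_pos hw)

lemma U2aux_arg {w : ℂ} (hw : ‖w‖ < 1) :
    |Complex.arg ((1 + w)/(1 - w))| < Real.pi / 2 :=
  Complex.abs_arg_lt_pi_div_two_iff.mpr (Or.inl (U2aux_re_pos hw))

lemma U2aux_diffOn (a : ℂ) (s₀ c : ℝ) :
    DifferentiableOn ℂ (fun w => a + (s₀:ℂ) *
      Complex.exp (Complex.I * (c:ℝ) * Complex.log ((1 + w)/(1 - w)))) (ball (0:ℂ) 1) := by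
  intro w hw
  have hw1 : ‖w‖ < 1 := by simpa [Complex.dist_eq] using mem_ball.mp hw
  have hg : DifferentiableAt ℂ (fun w : ℂ => (1 + w)/(1 - w)) w :=
    (differentiableAt_id.const_add 1).div (differentiableAt_id.const_sub 1) (U2aux_ne hw1)
  have hlog : DifferentiableAt ℂ (fun w : ℂ => Complex.log ((1 + w)/(1 - w))) w :=
    by have := (Complex.differentiableAt_log (U2aux_slit hw1)).comp w hg; exact this
  exact (((hlog.const_mul _).cexp.const_mul _).const_add _).differentiableWithinAt

lemma U2aux_deriv (a : ℂ) (s₀ c : ℝ) :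
    deriv (fun w => a + (s₀:ℂ) *
      Complex.exp (Complex.I * (c:ℝ) * Complex.log ((1 + w)/(1 - w)))) 0
      = (s₀:ℂ) * (Complex.I * (c:ℝ) * 2) := by
  have ha1 : HasDerivAt (fun w : ℂ => 1 + w) 1 0 := by
    simpa using (hasDerivAt_id (0:ℂ)).const_add 1
  have ha2 : HasDerivAt (fun w : ℂ => 1 - w) (-1) 0 := by
    simpa using (hasDerivAt_id (0:ℂ)).const_sub 1
  have h0 : HasDerivAt (fun w : ℂ => (1 + w)/(1 - w)) 2 0 := by
    have := ha1.div ha2 (by norm_num : (1:ℂ) - 0 ≠ 0)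
    exact this.congr_deriv (by norm_num)
  have hslit : ((1:ℂ) + 0)/(1 - 0) ∈ Complex.slitPlane := by
    norm_num [Complex.slitPlane]
  have h1 : HasDerivAt (fun w : ℂ => Complex.log ((1 + w)/(1 - w)))
      ((((1:ℂ) + 0)/(1 - 0))⁻¹ * 2) 0 := by have := (Complex.hasDerivAt_log hslit).comp 0 h0; exact this
  have h2 := ((h1.const_mul (Complex.I * (c:ℝ))).cexp.const_mul (s₀:ℂ)).const_add a
  have := h2.deriv
  rw [this]
  norm_num [Complex.log_one]

lemma U2aux_abs (a : ℂ) {s₀ : ℝ} (c : ℝ) (hs : 0 ≤ s₀) (w : ℂ) :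
    ‖((a + (s₀:ℂ) *
      Complex.exp (Complex.I * (c:ℝ) * Complex.log ((1 + w)/(1 - w)))) - a)‖
      = s₀ * Real.exp (-(c * Complex.arg ((1 + w)/(1 - w)))) := by
  rw [add_sub_cancel_left, norm_mul, Complex.norm_real, Real.norm_eq_abs, _root_.abs_of_nonneg hs, Complex.norm_exp]
  congr 1
  simp [Complex.mul_re, Complex.log_im]

lemma U2aux_annulus_conn (a : ℂ) {ε r : ℝ} (hε : 0 < ε) (hεr : ε ≤ r) :
    IsPreconnected {z : ℂ | ε ≤ dist z a ∧ dist z a ≤ r} := by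
  have hrank : 1 < Module.rank ℝ ℂ := by
    rw [Complex.rank_real_complex]; norm_num
  have h1 : IsConnected (Set.Icc ε r ×ˢ Metric.sphere (0:ℂ) 1) :=
    (isConnected_Icc hεr).prod (isConnected_sphere hrank 0 zero_le_one)
  have hcont : Continuous fun p : ℝ × ℂ => a + p.1 • p.2 := by continuity
  have h2 := h1.image _ hcont.continuousOn
  have heq : (fun p : ℝ × ℂ => a + p.1 • p.2) '' (Set.Icc ε r ×ˢ Metric.sphere (0:ℂ) 1)
      = {z : ℂ | ε ≤ dist z a ∧ dist z a ≤ r} := by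
    ext z
    constructor
    · rintro ⟨⟨s, u⟩, ⟨⟨hs1, hs2⟩, hu⟩, rfl⟩
      have hu' : ‖u‖ = 1 := by simpa using hu
      have hd : dist (a + s • u) a = |s| := by
        rw [dist_eq_norm]; simp [norm_smul, hu']
      rw [Set.mem_setOf_eq, hd, _root_.abs_of_nonneg (hε.le.trans hs1)]
      exact ⟨hs1, hs2⟩
    · rintro ⟨h1', h2'⟩
      have hd0 : (0:ℝ) < dist z a := lt_of_lt_of_le hε h1'
      refine ⟨⟨dist z a, (dist z a)⁻¹ • (z - a)⟩, ⟨⟨h1', h2'⟩, ?_⟩, ?_⟩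
      · simp only [mem_sphere_iff_norm, sub_zero]
        have hz0 : ‖z - a‖ ≠ 0 := by rw [← dist_eq_norm]; exact hd0.ne'
        rw [norm_smul, norm_inv, Real.norm_eq_abs, _root_.abs_of_pos hd0, dist_eq_norm,
          inv_mul_cancel₀ hz0]
      · simp only [smul_smul]
        rw [mul_inv_cancel₀ hd0.ne', one_smul, add_sub_cancel]
  rw [heq] at h2
  exact h2.isPreconnected


/-- A set `E ⊆ ℂ` satisfies condition `(U)_{2,β}`. -/
def CondU2 (E : Set ℂ) (β : ℝ) : Prop :=
  ∃ C > (0 : ℝ), ∃ r₀ > (0 : ℝ), ∀ a ∈ E, ∀ r ∈ Set.Ioo (0 : ℝ) r₀,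
    ({z : ℂ | C * r * (Real.log (1 / r)) ^ (-β) ≤ dist z a ∧ dist z a ≤ r} ∩ E).Nonempty

set_option maxHeartbeats 1000000 in
/-- If the Poincaré density satisfies `ρ_Ω(z) ≥ M/(δ_Ω(z) log log(1/δ_Ω(z)))`
near the boundary for some `M > 0` (equivalently, every holomorphic
`f : 𝔻 → Ω` with `f 0 = z` has
`|f′(0)| ≤ (2/M)·δ_Ω(z)·log log(1/δ_Ω(z))`), then `∂Ω` satisfies `(U)_{2,β}`
for some `β > 0`. -/
theorem stmt_6 (Ω : Set ℂ) (hopen : IsOpen Ω) (hconn : IsConnected Ω)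
    (hbd : (frontier Ω).Nonempty)
    (htwo : ∃ p q : ℂ, p ∉ Ω ∧ q ∉ Ω ∧ p ≠ q)
    (M δ₀ : ℝ) (hM : 0 < M) (hδ₀ : δ₀ ∈ Set.Ioo (0 : ℝ) (Real.exp 1)⁻¹)
    (hρ : ∀ z ∈ Ω, infDist z (frontier Ω) < δ₀ →
      ∀ f : ℂ → ℂ, DifferentiableOn ℂ f (ball (0 : ℂ) 1) →
        MapsTo f (ball (0 : ℂ) 1) Ω → f 0 = z →
          ‖deriv f 0‖ ≤
            (2 / M) * infDist z (frontier Ω) *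
              Real.log (Real.log (1 / infDist z (frontier Ω)))) :
    ∃ β > (0 : ℝ), CondU2 (frontier Ω) β := by
  obtain ⟨hδ₀pos, hδ₀lt⟩ := hδ₀
  have hπ : (0:ℝ) < Real.pi := Real.pi_pos
  set β : ℝ := 1 + 2 * Real.pi / M with hβdef
  clear_value β
  have hβ1 : 1 ≤ β := by
    have h0 : (0:ℝ) ≤ 2*Real.pi/M := by positivity
    rw [hβdef]
    linarith
  have hβpos : 0 < β := lt_of_lt_of_le one_pos hβ1
  have hβgt : 2 * Real.pi / M < β := by rw [hβdef]; linarith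
  obtain ⟨x₀, hx₀⟩ := hconn.nonempty
  obtain ⟨ρ₀, hρ₀pos, hball⟩ := Metric.isOpen_iff.mp hopen x₀ hx₀
  have hx₁ : x₀ + ((ρ₀/2 : ℝ) : ℂ) ∈ Ω := by
    apply hball
    rw [mem_ball, Complex.dist_eq, add_sub_cancel_left, Complex.norm_real, Real.norm_eq_abs,
      _root_.abs_of_pos (by linarith)]
    linarith
  refine ⟨β, hβpos, 1, one_pos, min (min δ₀ (Real.exp (-(4+β)))) (ρ₀/2), by positivity, ?_⟩
  intro a ha r hr
  obtain ⟨hr0, hrr₀⟩ := hr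
  by_contra hempty
  set t := Real.log (1/r) with htdef
  clear_value t
  have hrδ₀ : r < δ₀ := lt_of_lt_of_le hrr₀ ((min_le_left _ _).trans (min_le_left _ _))
  have hrexp : r < Real.exp (-(4+β)) := lt_of_lt_of_le hrr₀ ((min_le_left _ _).trans (min_le_right _ _))
  have hrρ : r < ρ₀/2 := lt_of_lt_of_le hrr₀ (min_le_right _ _)
  have ht : 4 + β < t := by
    rw [htdef]
    apply (Real.lt_log_iff_exp_lt (by positivity)).mpr
    rw [lt_div_iff₀ hr0]
    calc Real.exp (4+β) * r < Real.exp (4+β) * Real.exp (-(4+β)) := by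
          exact mul_lt_mul_of_pos_left hrexp (Real.exp_pos _)
      _ = 1 := by rw [← Real.exp_add, show (4+β) + -(4+β) = 0 by ring, Real.exp_zero]
  have ht4 : 4 ≤ t := by linarith
  have ht0 : 0 < t := by linarith
  have ht1 : 1 < t := by linarith
  have hlogt : 0 < Real.log t := Real.log_pos ht1
  set ε := r * t ^ (-β) with hεdef
  clear_value ε
  have hεpos : 0 < ε := by rw [hεdef]; exact mul_pos hr0 (Real.rpow_pos_of_pos ht0 _)
  set s₀ := r * t ^ (-(β/2)) with hs₀def
  clear_value s₀
  have hs₀pos : 0 < s₀ := by rw [hs₀def]; exact mul_pos hr0 (Real.rpow_pos_of_pos ht0 _)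
  have hhalf : t ^ (-(β/2)) ≤ 1/2 := by
    rw [Real.rpow_neg ht0.le]
    have h2 : (2:ℝ) ≤ t ^ (β/2) := by
      have ha' : (4:ℝ) ^ ((1:ℝ)/2) ≤ t ^ ((1:ℝ)/2) :=
        Real.rpow_le_rpow (by norm_num) ht4 (by norm_num)
      have hb : ((4:ℝ)) ^ ((1:ℝ)/2) = 2 := by
        rw [show (4:ℝ) = 2^(2:ℕ) by norm_num, ← Real.rpow_natCast (2:ℝ) 2,
          ← Real.rpow_mul (by norm_num : (0:ℝ) ≤ 2)]
        norm_num
      have hc : t ^ ((1:ℝ)/2) ≤ t ^ (β/2) :=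
        Real.rpow_le_rpow_of_exponent_le ht1.le (by linarith)
      rw [hb] at ha'
      linarith
    calc (t ^ (β/2))⁻¹ ≤ (2:ℝ)⁻¹ := inv_anti₀ (by norm_num) h2
      _ = 1/2 := by norm_num
  have hεs₀ : ε = s₀ * t ^ (-(β/2)) := by
    rw [hs₀def, hεdef, mul_assoc, ← Real.rpow_add ht0]
    congr 1
    ring
  have hs₀r : s₀ * t ^ (β/2) = r := by
    rw [hs₀def, mul_assoc, ← Real.rpow_add ht0]
    norm_num
  have hεs2 : ε ≤ s₀/2 := by
    rw [hεs₀]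
    calc s₀ * t^(-(β/2)) ≤ s₀ * (1/2) := mul_le_mul_of_nonneg_left hhalf hs₀pos.le
      _ = s₀/2 := by ring
  have hs₀r2 : s₀ ≤ r/2 := by
    rw [hs₀def]
    calc r * t^(-(β/2)) ≤ r * (1/2) := mul_le_mul_of_nonneg_left hhalf hr0.le
      _ = r/2 := by ring
  have hεr : ε ≤ r := by linarith
  have hεs : ε ≤ s₀ := by linarith
  have hB : ∀ x : ℂ, ε ≤ dist x a → dist x a ≤ r → x ∉ frontier Ω := by
    intro x h1 h2 hx
    refine hempty ⟨x, ⟨?_, h2⟩, hx⟩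
    rw [one_mul, ← hεdef]
    exact h1
  set B := {z : ℂ | ε ≤ dist z a ∧ dist z a ≤ r} with hBdef
  clear_value B
  have hBconn := U2aux_annulus_conn a hεpos hεr
  rw [← hBdef] at hBconn
  have hBsub : B ⊆ Ω ∪ (closure Ω)ᶜ := by
    intro x hx
    rw [hBdef] at hx
    simp only [Set.mem_setOf_eq] at hx
    by_cases hcl : x ∈ closure Ω
    · left
      by_contra hxΩ
      refine hB x hx.1 hx.2 ?_
      rw [hopen.frontier_eq]
      exact ⟨hcl, hxΩ⟩
    · right; exact hcl
  have hdisj : Disjoint Ω (closure Ω)ᶜ := disjoint_compl_right.mono_left subset_closure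
  rcases hBconn.subset_or_subset hopen isClosed_closure.isOpen_compl hdisj hBsub with hBΩ | hBE
  · -- main case : annulus inside Ω
    set L := β * Real.log t with hLdef
    clear_value L
    have hLpos : 0 < L := by rw [hLdef]; exact mul_pos hβpos hlogt
    set c := L / Real.pi with hcdef
    clear_value c
    have hcpos : 0 < c := by rw [hcdef]; exact div_pos hLpos hπ
    have hts : Real.exp (L/2) = t ^ (β/2) := by
      rw [Real.rpow_def_of_pos ht0]
      congr 1
      rw [hLdef]; ring
    have hts' : Real.exp (-(L/2)) = t ^ (-(β/2)) := by
      rw [Real.rpow_def_of_pos ht0]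
      congr 1
      rw [hLdef]; ring
    have hdza : dist (a + (s₀:ℂ)) a = s₀ := by
      rw [Complex.dist_eq, add_sub_cancel_left, Complex.norm_real, Real.norm_eq_abs, _root_.abs_of_pos hs₀pos]
    have hzB : (a + (s₀:ℂ)) ∈ B := by
      rw [hBdef]
      refine ⟨?_, ?_⟩ <;> rw [hdza]
      · exact hεs
      · linarith
    have hzΩ : (a + (s₀:ℂ)) ∈ Ω := hBΩ hzB
    have hδle : infDist (a + (s₀:ℂ)) (frontier Ω) ≤ s₀ := by
      have := infDist_le_dist_of_mem (x := a + (s₀:ℂ)) ha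
      rwa [hdza] at this
    have hδge : s₀/2 ≤ infDist (a + (s₀:ℂ)) (frontier Ω) := by
      by_contra hlt
      push_neg at hlt
      obtain ⟨y, hyF, hy⟩ := (infDist_lt_iff hbd).mp hlt
      have hyB : ¬(ε ≤ dist y a ∧ dist y a ≤ r) := fun h => hB y h.1 h.2 hyF
      rw [not_and_or, not_le, not_le] at hyB
      have htr1 := dist_triangle (a + (s₀:ℂ)) y a
      have htr2 := dist_triangle y (a + (s₀:ℂ)) a
      rw [hdza] at htr1
      rw [dist_comm y (a + (s₀:ℂ)), hdza] at htr2
      rcases hyB with h | h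
      · linarith
      · linarith
    have hδpos : 0 < infDist (a + (s₀:ℂ)) (frontier Ω) := lt_of_lt_of_le (by linarith) hδge
    have hδδ₀ : infDist (a + (s₀:ℂ)) (frontier Ω) < δ₀ := by linarith
    have hmaps : MapsTo (fun w => a + (s₀:ℂ) *
        Complex.exp (Complex.I * (c:ℝ) * Complex.log ((1 + w)/(1 - w)))) (ball (0:ℂ) 1) Ω := by
      intro w hw
      have hw1 : ‖w‖ < 1 := by simpa [Complex.dist_eq] using mem_ball.mp hw
      have habs := U2aux_abs a c hs₀pos.le w
      have harg := U2aux_arg hw1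
      have hcpi : c * (Real.pi/2) = L/2 := by
        rw [hcdef]; field_simp
      have habslt : |c * Complex.arg ((1 + w)/(1 - w))| < L/2 := by
        rw [abs_mul, _root_.abs_of_pos hcpos]
        calc c * |Complex.arg ((1 + w)/(1 - w))| < c * (Real.pi/2) :=
              mul_lt_mul_of_pos_left harg hcpos
          _ = L/2 := hcpi
      obtain ⟨hlb', hub'⟩ := abs_lt.mp habslt
      apply hBΩ
      rw [hBdef]
      refine ⟨?_, ?_⟩
      · show ε ≤ dist (a + (s₀:ℂ) * Complex.exp (Complex.I * (c:ℝ) *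
          Complex.log ((1 + w)/(1 - w)))) a
        rw [Complex.dist_eq, habs]
        calc ε = s₀ * Real.exp (-(L/2)) := by rw [hts', ← hεs₀]
          _ ≤ s₀ * Real.exp (-(c * Complex.arg ((1 + w)/(1 - w)))) :=
            mul_le_mul_of_nonneg_left (Real.exp_le_exp.mpr (by linarith)) hs₀pos.le
      · show dist (a + (s₀:ℂ) * Complex.exp (Complex.I * (c:ℝ) *
          Complex.log ((1 + w)/(1 - w)))) a ≤ r
        rw [Complex.dist_eq, habs]
        calc s₀ * Real.exp (-(c * Complex.arg ((1 + w)/(1 - w))))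
            ≤ s₀ * Real.exp (L/2) :=
              mul_le_mul_of_nonneg_left (Real.exp_le_exp.mpr (by linarith)) hs₀pos.le
          _ = r := by rw [hts, hs₀r]
    have hf0 : (fun w => a + (s₀:ℂ) *
        Complex.exp (Complex.I * (c:ℝ) * Complex.log ((1 + w)/(1 - w)))) 0 = a + (s₀:ℂ) := by
      norm_num [Complex.log_one]
    have happ := hρ _ hzΩ hδδ₀ _ (U2aux_diffOn a s₀ c) hmaps hf0
    rw [U2aux_deriv a s₀ c] at happ
    have habs2 : ‖(s₀:ℂ) * (Complex.I * (c:ℝ) * 2)‖ = s₀ * (c * 2) := by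
      rw [norm_mul, norm_mul, norm_mul, Complex.norm_I, Complex.norm_real, Real.norm_eq_abs, Complex.norm_real, Real.norm_eq_abs,
        Complex.norm_two, _root_.abs_of_pos hs₀pos, _root_.abs_of_pos hcpos, one_mul]
    rw [habs2] at happ
    set δ := infDist (a + (s₀:ℂ)) (frontier Ω) with hδdef
    clear_value δ
    have hδ1 : δ < 1 := by
      have hr1 : r < 1 := by
        calc r < Real.exp (-(4+β)) := hrexp
          _ < 1 := by
            rw [← Real.exp_zero]
            exact Real.exp_lt_exp.mpr (by linarith)
      linarith
    have hlog1δpos : 0 < Real.log (1/δ) := Real.log_pos (by rw [lt_div_iff₀ hδpos]; linarith)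
    have htle : t ≤ Real.log (1/δ) := by
      rw [htdef]
      exact Real.log_le_log (by positivity) (one_div_le_one_div_of_le hδpos (by linarith))
    have hll_nonneg : 0 ≤ Real.log (Real.log (1/δ)) := Real.log_nonneg (by linarith)
    have hlogub : Real.log (1/δ) ≤ t * t := by
      have h1 : 1/δ ≤ 2/s₀ := by
        rw [div_le_div_iff₀ hδpos hs₀pos]
        linarith
      have h2 : (2:ℝ)/s₀ = 2 * t^(β/2) / r := by
        rw [div_eq_div_iff hs₀pos.ne' hr0.ne', ← hs₀r]
        ring
      rw [h2] at h1
      have h4 : Real.log (1/δ) ≤ Real.log (2 * t^(β/2)/r) := Real.log_le_log (by positivity) h1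
      have h5 : Real.log (2*t^(β/2)/r) = Real.log 2 + (β/2) * Real.log t + t := by
        rw [Real.log_div (by positivity) hr0.ne', Real.log_mul two_ne_zero (by positivity),
          Real.log_rpow ht0]
        have hlr : Real.log (1/r) = - Real.log r := by rw [one_div, Real.log_inv]
        have : t = - Real.log r := by rw [htdef, hlr]
        linarith [this]
      have h6 : Real.log 2 ≤ 1 := by
        have := Real.log_two_lt_d9
        linarith
      have h7 : Real.log t ≤ t := by linarith [Real.log_le_sub_one_of_pos ht0]
      have h8 : (β/2) * Real.log t ≤ (β/2) * t :=
        mul_le_mul_of_nonneg_left h7 (by positivity)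
      have h9 := mul_lt_mul_of_pos_right ht ht0
      have h10 : 0 ≤ β * t := mul_nonneg hβpos.le ht0.le
      linarith [h4, h5]
    have hloglog : Real.log (Real.log (1/δ)) ≤ 2 * Real.log t := by
      have h1 := Real.log_le_log hlog1δpos hlogub
      rw [Real.log_mul ht0.ne' ht0.ne'] at h1
      linarith
    have hrhs : (2/M) * δ * Real.log (Real.log (1/δ)) ≤ (2/M) * (s₀ * (2*Real.log t)) := by
      have h1 : δ * Real.log (Real.log (1/δ)) ≤ s₀ * (2*Real.log t) :=
        mul_le_mul hδle hloglog hll_nonneg hs₀pos.le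
      calc (2/M) * δ * Real.log (Real.log (1/δ)) = (2/M) * (δ * Real.log (Real.log (1/δ))) := by
            ring
        _ ≤ (2/M) * (s₀ * (2*Real.log t)) := mul_le_mul_of_nonneg_left h1 (by positivity)
    have hkey : s₀ * (c * 2) ≤ (2/M) * (s₀ * (2*Real.log t)) := le_trans happ hrhs
    have hcL : c * Real.pi = L := by rw [hcdef]; exact div_mul_cancel₀ L hπ.ne'
    have hP : 0 < s₀ * Real.log t := mul_pos hs₀pos hlogt
    have h2 : s₀ * (c*2) * (Real.pi * M) ≤ (2/M) * (s₀*(2*Real.log t)) * (Real.pi * M) :=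
      mul_le_mul_of_nonneg_right hkey (by positivity)
    have e1 : s₀ * (c*2) * (Real.pi * M) = 2*M*(β*Real.log t)*s₀ := by
      have h' : s₀ * (c*2) * (Real.pi * M) = 2*M*s₀*(c*Real.pi) := by ring
      rw [h', hcL, hLdef]
      ring
    have e2 : (2/M)*(s₀*(2*Real.log t))*(Real.pi * M) = 4*Real.pi*Real.log t*s₀ := by
      field_simp
      ring
    rw [e1, e2] at h2
    have h3 : (M*β) * (s₀ * Real.log t) ≤ (2*Real.pi) * (s₀ * Real.log t) := by linarith [h2]
    have hfin : M * β ≤ 2 * Real.pi := le_of_mul_le_mul_right h3 hP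
    have hgt : 2 * Real.pi < M * β := by
      have := (div_lt_iff₀ hM).mp hβgt
      linarith
    linarith
  · -- annulus outside closure Ω
    have hΩsub : Ω ⊆ ball a ε ∪ (closedBall a r)ᶜ := by
      intro x hx
      have hxB : x ∉ B := fun hxB => (hBE hxB) (subset_closure hx)
      rw [hBdef] at hxB
      simp only [Set.mem_setOf_eq] at hxB
      rw [not_and_or, not_le, not_le] at hxB
      rcases hxB with h | h
      · left; exact mem_ball.mpr h
      · right
        simp only [Set.mem_compl_iff, mem_closedBall, not_le]
        exact h
    have hdisj2 : Disjoint (ball a ε) (closedBall a r)ᶜ :=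
      disjoint_compl_right.mono_left
        (ball_subset_closedBall.trans (closedBall_subset_closedBall hεr))
    have hne : (Ω ∩ ball a ε).Nonempty := by
      have hacl : a ∈ closure Ω := frontier_subset_closure ha
      obtain ⟨b, hbΩ, hb⟩ := Metric.mem_closure_iff.mp hacl ε hεpos
      exact ⟨b, hbΩ, mem_ball.mpr (by rwa [dist_comm])⟩
    have hsub := hconn.isPreconnected.subset_left_of_subset_union isOpen_ball
      isClosed_closedBall.isOpen_compl hdisj2 hΩsub hne
    have d1 : dist x₀ a < ε := mem_ball.mp (hsub hx₀)
    have d2 : dist (x₀ + ((ρ₀/2 : ℝ):ℂ)) a < ε := mem_ball.mp (hsub hx₁)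
    have d3 : dist (x₀ + ((ρ₀/2:ℝ):ℂ)) x₀ = ρ₀/2 := by
      rw [Complex.dist_eq, add_sub_cancel_left, Complex.norm_real, Real.norm_eq_abs,
        _root_.abs_of_pos (by linarith)]
    have d4 := dist_triangle (x₀ + ((ρ₀/2:ℝ):ℂ)) a x₀
    rw [d3, dist_comm a x₀] at d4
    linarith
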